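/- Let n ≥ 1, k ∈ ℤ and ℓ ≥ 0. Define Φ : Z^{ℓ,2}_{n,k} → U(n)^{2(2ℓ+1)} by Φ(V, d, c, V', d', c') = (V, d⁻¹ c 𝔯(V') c⁻¹ d, d⁻¹, c c'), where the tuple is read as (a₁,b₁,…,a_{2ℓ+1},b_{2ℓ+1}) with the last pair (a_{2ℓ+1}, b_{2ℓ+1}) = (d⁻¹, c c'). Then the image of Φ is exactly the representation variety X^{2ℓ+1}_{n,k} = {W ∈ U(n)^{2(2ℓ+1)} : 𝔪(W) = e^{−2π√−1 k/n} Iₙ}. -/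

import Mathlib

/-- `U n` is the group of `n × n` complex unitary matrices. -/
noncomputable abbrev Un (n : ℕ) := Matrix.unitaryGroup (Fin n) ℂ

/-- For `V = (a₁,b₁,…,a_g,b_g) ∈ U(n)^{2g}`, `mfrak V = ∏ᵢ [aᵢ, bᵢ]`
(ordered product of commutators). -/
noncomputable def mfrak {n g : ℕ} (V : Fin g → Un n × Un n) : Un n :=
  (List.ofFn (fun i => (V i).1 * (V i).2 * (V i).1⁻¹ * (V i).2⁻¹)).prod

/-- The representation variety `X^{g}_{n,k}` of central Yang–Mills connections:
tuples `V ∈ U(n)^{2g}` with `𝔪(V) = e^{-2π√-1 k/n} Iₙ`. -/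
noncomputable def YMset (n g : ℕ) (k : ℤ) : Set (Fin g → Un n × Un n) :=
  {V | (mfrak V : Matrix (Fin n) (Fin n) ℂ)
      = Complex.exp (-(2 * Real.pi * (k : ℝ) / (n : ℝ)) * Complex.I) • 1}

/-- The type-2 symmetric representation variety `Z^{ℓ,2}_{n,k}`: tuples
`(V, d, c, V', d', c')` with `𝔪(V) = e^{-π√-1 k/n} c d' c⁻¹ d` and
`𝔪(V') = e^{π√-1 k/n} c' d (c')⁻¹ d'`. -/
noncomputable def Z2set (n ℓ : ℕ) (k : ℤ) :
    Set ((Fin ℓ → Un n × Un n) × Un n × Un n × (Fin ℓ → Un n × Un n) × Un n × Un n) :=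
  {z | (mfrak z.1 : Matrix (Fin n) (Fin n) ℂ)
        = Complex.exp (-(Real.pi * (k : ℝ) / (n : ℝ)) * Complex.I) •
            ((z.2.2.1 * z.2.2.2.2.1 * z.2.2.1⁻¹ * z.2.1 : Un n) : Matrix (Fin n) (Fin n) ℂ) ∧
       (mfrak z.2.2.2.1 : Matrix (Fin n) (Fin n) ℂ)
        = Complex.exp ((Real.pi * (k : ℝ) / (n : ℝ)) * Complex.I) •
            ((z.2.2.2.2.2 * z.2.1 * z.2.2.2.2.2⁻¹ * z.2.2.2.2.1 : Un n) :
              Matrix (Fin n) (Fin n) ℂ)}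

/-- `Φ(V, d, c, V', d', c') = (V, d⁻¹ c 𝔯(V') c⁻¹ d, d⁻¹, c c')`, where
`𝔯(V') = (b'_ℓ, a'_ℓ, …, b'₁, a'₁)` and conjugation by `d⁻¹ c` is entrywise;
the result is read as `(a₁,b₁,…,a_{2ℓ+1},b_{2ℓ+1})` with the last pair
`(a_{2ℓ+1}, b_{2ℓ+1}) = (d⁻¹, c c')`. -/
noncomputable def Phi2 {n ℓ : ℕ}
    (z : (Fin ℓ → Un n × Un n) × Un n × Un n × (Fin ℓ → Un n × Un n) × Un n × Un n) :
    Fin (2 * ℓ + 1) → Un n × Un n := fun j =>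
  if h : (j : ℕ) < ℓ then z.1 ⟨j, h⟩
  else if h2 : (j : ℕ) < 2 * ℓ then
    ((z.2.1⁻¹ * z.2.2.1) * (z.2.2.2.1 ⟨2 * ℓ - 1 - (j : ℕ), by omega⟩).2 *
        (z.2.1⁻¹ * z.2.2.1)⁻¹,
     (z.2.1⁻¹ * z.2.2.1) * (z.2.2.2.1 ⟨2 * ℓ - 1 - (j : ℕ), by omega⟩).1 *
        (z.2.1⁻¹ * z.2.2.1)⁻¹)
  else (z.2.1⁻¹, z.2.2.1 * z.2.2.2.2.2)

section scalar

noncomputable def sUn (n : ℕ) (θ : ℝ) : Un n :=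
  ⟨Complex.exp (θ * Complex.I) • 1, by
    rw [Matrix.mem_unitaryGroup_iff]
    rw [star_smul, star_one, smul_mul_assoc, mul_smul_comm, smul_smul, mul_one]
    have : star (Complex.exp (θ * Complex.I)) = Complex.exp (-(θ * Complex.I)) := by
      rw [show (star (Complex.exp (θ*Complex.I)) : ℂ)
          = (starRingEnd ℂ) (Complex.exp (θ*Complex.I)) from rfl, ← Complex.exp_conj]
      congr 1
      simp [Complex.ext_iff]
    rw [this, ← Complex.exp_add, add_neg_cancel, Complex.exp_zero, one_smul]⟩

lemma sUn_coe (n : ℕ) (θ : ℝ) :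
    ((sUn n θ : Un n) : Matrix (Fin n) (Fin n) ℂ) = Complex.exp (θ * Complex.I) • 1 := rfl

lemma sUn_mul_coe (n : ℕ) (θ : ℝ) (x : Un n) :
    ((sUn n θ * x : Un n) : Matrix (Fin n) (Fin n) ℂ)
      = Complex.exp (θ * Complex.I) • (x : Matrix (Fin n) (Fin n) ℂ) := by
  show (sUn n θ : Matrix (Fin n) (Fin n) ℂ) * x = _
  rw [sUn_coe, smul_mul_assoc, one_mul]

lemma coe_smul_iff (n : ℕ) (θ : ℝ) (x y : Un n) :
    (x : Matrix (Fin n) (Fin n) ℂ)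
        = Complex.exp (θ * Complex.I) • (y : Matrix (Fin n) (Fin n) ℂ)
      ↔ x = sUn n θ * y := by
  rw [← sUn_mul_coe]
  exact ⟨fun h => Subtype.coe_injective h, fun h => by rw [h]⟩

lemma coe_smul_one_iff (n : ℕ) (θ : ℝ) (x : Un n) :
    (x : Matrix (Fin n) (Fin n) ℂ) = Complex.exp (θ * Complex.I) • 1 ↔ x = sUn n θ := by
  rw [show (1 : Matrix (Fin n) (Fin n) ℂ) = ((1 : Un n) : Matrix (Fin n) (Fin n) ℂ) from rfl,
    coe_smul_iff, mul_one]

lemma sUn_add (n : ℕ) (θ θ' : ℝ) : sUn n θ * sUn n θ' = sUn n (θ + θ') := by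
  apply Subtype.coe_injective
  show ((sUn n θ * sUn n θ' : Un n) : Matrix (Fin n) (Fin n) ℂ) = ((sUn n (θ+θ') : Un n) : Matrix (Fin n) (Fin n) ℂ)
  rw [sUn_mul_coe, sUn_coe, sUn_coe, smul_smul, ← Complex.exp_add]
  congr 2
  push_cast
  ring

lemma sUn_central (n : ℕ) (θ : ℝ) (x : Un n) : sUn n θ * x = x * sUn n θ := by
  apply Subtype.coe_injective
  show ((sUn n θ * x : Un n) : Matrix (Fin n) (Fin n) ℂ) = ((x * sUn n θ : Un n) : Matrix (Fin n) (Fin n) ℂ)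
  rw [sUn_mul_coe]
  show _ = (x : Matrix (Fin n) (Fin n) ℂ) * (sUn n θ : Matrix (Fin n) (Fin n) ℂ)
  rw [sUn_coe, mul_smul_comm, mul_one]

lemma sUn_zero (n : ℕ) : sUn n 0 = 1 := by
  apply Subtype.coe_injective
  show ((sUn n 0 : Un n) : Matrix (Fin n) (Fin n) ℂ) = ((1 : Un n) : Matrix (Fin n) (Fin n) ℂ)
  rw [sUn_coe]
  norm_num

lemma sUn_inv (n : ℕ) (θ : ℝ) : (sUn n θ)⁻¹ = sUn n (-θ) := by
  apply inv_eq_of_mul_eq_one_right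
  rw [sUn_add]
  rw [add_neg_cancel, sUn_zero]

end scalar

section lists

variable {G : Type*} [Group G]

lemma prod_ofFn_conj : ∀ {m : ℕ} (g : G) (f : Fin m → G),
    (List.ofFn fun i => g * f i * g⁻¹).prod = g * (List.ofFn f).prod * g⁻¹ := by
  intro m
  induction m with
  | zero => simp
  | succ m ih =>
    intro g f
    rw [List.ofFn_succ, List.ofFn_succ, List.prod_cons, List.prod_cons,
      ih g (fun i => f i.succ)]
    group

lemma prod_ofFn_rev_inv : ∀ {m : ℕ} (f : Fin m → G),
    (List.ofFn fun i => (f i.rev)⁻¹).prod = ((List.ofFn f).prod)⁻¹ := by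
  intro m
  induction m with
  | zero => simp
  | succ m ih =>
    intro f
    rw [List.ofFn_succ' (fun i : Fin (m+1) => (f i.rev)⁻¹), List.prod_concat,
      List.ofFn_succ (f := f), List.prod_cons]
    simp only [Fin.rev_castSucc, Fin.rev_last]
    rw [ih (fun j => f j.succ), mul_inv_rev]

end lists

section mfraklemmas

variable {n : ℕ}

lemma mfrak_congr {g : ℕ} {f f' : Fin g → Un n × Un n} (h : ∀ i, f i = f' i) :
    mfrak f = mfrak f' := by
  rw [funext h]

lemma mfrak_cast {a b : ℕ} (h : a = b) (f : Fin b → Un n × Un n) :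
    mfrak (fun i : Fin a => f (Fin.cast h i)) = mfrak f := by
  subst h
  rfl

lemma mfrak_succ {g : ℕ} (f : Fin (g+1) → Un n × Un n) :
    mfrak f = mfrak (fun i : Fin g => f i.castSucc)
      * ((f (Fin.last g)).1 * (f (Fin.last g)).2 * (f (Fin.last g)).1⁻¹ * (f (Fin.last g)).2⁻¹) := by
  unfold mfrak
  rw [List.ofFn_succ' (fun i : Fin (g+1) => (f i).1 * (f i).2 * (f i).1⁻¹ * (f i).2⁻¹),
    List.prod_concat]

lemma mfrak_add {a b : ℕ} (f : Fin (a+b) → Un n × Un n) :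
    mfrak f = mfrak (fun i : Fin a => f (Fin.castAdd b i))
      * mfrak (fun i : Fin b => f (Fin.natAdd a i)) := by
  unfold mfrak
  rw [List.ofFn_add (f := fun i : Fin (a+b) => (f i).1 * (f i).2 * (f i).1⁻¹ * (f i).2⁻¹),
    List.prod_append]
  rfl

lemma mfrak_conj {m : ℕ} (g : Un n) (f : Fin m → Un n × Un n) :
    mfrak (fun i => (g * (f i).1 * g⁻¹, g * (f i).2 * g⁻¹)) = g * mfrak f * g⁻¹ := by
  unfold mfrak
  rw [← prod_ofFn_conj g (fun i => (f i).1 * (f i).2 * (f i).1⁻¹ * (f i).2⁻¹)]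
  congr 1
  congr 1
  funext i
  beta_reduce
  group

lemma mfrak_revswap {m : ℕ} (V : Fin m → Un n × Un n) :
    mfrak (fun i => ((V i.rev).2, (V i.rev).1)) = (mfrak V)⁻¹ := by
  unfold mfrak
  rw [← prod_ofFn_rev_inv (fun i => (V i).1 * (V i).2 * (V i).1⁻¹ * (V i).2⁻¹)]
  congr 1
  congr 1
  funext i
  beta_reduce
  group

lemma mfrak_split3 {ℓ : ℕ} (W : Fin (2*ℓ+1) → Un n × Un n) :
    mfrak W = mfrak (fun i : Fin ℓ => W ⟨i.val, by omega⟩)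
      * mfrak (fun i : Fin ℓ => W ⟨ℓ + i.val, by omega⟩)
      * ((W ⟨2*ℓ, by omega⟩).1 * (W ⟨2*ℓ, by omega⟩).2
          * (W ⟨2*ℓ, by omega⟩).1⁻¹ * (W ⟨2*ℓ, by omega⟩).2⁻¹) := by
  have h : ℓ + ℓ + 1 = 2*ℓ + 1 := by omega
  rw [← mfrak_cast h W, mfrak_succ, mfrak_add]
  have e3 : Fin.cast h (Fin.last (ℓ+ℓ)) = (⟨2*ℓ, by omega⟩ : Fin (2*ℓ+1)) :=
    Fin.ext (by first | (simp; omega) | simp | omega)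
  rw [e3]
  refine congrArg₂ HMul.hMul (congrArg₂ HMul.hMul ?_ ?_) rfl
  · refine mfrak_congr fun i => congrArg W (Fin.ext ?_)
    simp
  · refine mfrak_congr fun i => congrArg W (Fin.ext ?_)
    simp
    omega

end mfraklemmas

section central

variable {G : Type*} [Group G]

lemma central_calc (u A B C g : G) (hc : ∀ x, u*x = x*u)
    (key : A * (g * (B⁻¹ * (g⁻¹ * C))) = 1) :
    (u*A) * (g * (u⁻¹*B)⁻¹ * g⁻¹) * C = u * u := by
  calc (u*A) * (g * (u⁻¹*B)⁻¹ * g⁻¹) * C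
      = (u*A) * (g*B⁻¹) * (u * (g⁻¹ * C)) := by group
    _ = (u*A) * (g*B⁻¹) * ((g⁻¹ * C) * u) := by rw [hc (g⁻¹ * C)]
    _ = u * (A * (g * (B⁻¹ * (g⁻¹ * C)))) * u := by group
    _ = u * u := by rw [key, mul_one]

lemma conj_cancel (g x : G) : g * (g⁻¹ * x * g⁻¹⁻¹) * g⁻¹ = x := by group

lemma central_calc2 (u P M a b : G) (hc : ∀ x, u*x = x*u)
    (hW : P * M * (a * b * a⁻¹ * b⁻¹) = u * u) :
    (a⁻¹⁻¹ * 1)⁻¹ * M⁻¹ * (a⁻¹⁻¹ * 1)⁻¹⁻¹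
      = u⁻¹ * (b * a⁻¹ * b⁻¹ * (u⁻¹ * (P * a))) := by
  have hcinv : ∀ x : G, x * u⁻¹ = u⁻¹ * x := by
    intro x
    calc x * u⁻¹ = u⁻¹ * (u * x) * u⁻¹ := by group
      _ = u⁻¹ * (x * u) * u⁻¹ := by rw [hc x]
      _ = u⁻¹ * x := by group
  have hM : M⁻¹ = (a*b*a⁻¹*b⁻¹) * ((u*u)⁻¹ * P) := by rw [← hW]; group
  rw [hM]
  calc (a⁻¹⁻¹ * 1)⁻¹ * ((a*b*a⁻¹*b⁻¹) * ((u*u)⁻¹ * P)) * (a⁻¹⁻¹ * 1)⁻¹⁻¹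
      = (b * a⁻¹ * b⁻¹) * u⁻¹ * (u⁻¹ * (P * a)) := by group
    _ = u⁻¹ * (b * a⁻¹ * b⁻¹) * (u⁻¹ * (P * a)) := by rw [hcinv (b * a⁻¹ * b⁻¹)]
    _ = u⁻¹ * (b * a⁻¹ * b⁻¹ * (u⁻¹ * (P * a))) := by group

end central

section phi2lemmas

variable {n ℓ : ℕ}
  (z : (Fin ℓ → Un n × Un n) × Un n × Un n × (Fin ℓ → Un n × Un n) × Un n × Un n)

lemma Phi2_apply_lt (j : Fin (2*ℓ+1)) (h : (j:ℕ) < ℓ) (m : Fin ℓ) (hm : (m:ℕ) = (j:ℕ)) :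
    Phi2 z j = z.1 m := by
  simp only [Phi2]
  rw [dif_pos h]
  exact congrArg z.1 (Fin.ext hm.symm)

lemma Phi2_apply_mid (j : Fin (2*ℓ+1)) (h1 : ¬ (j:ℕ) < ℓ) (h2 : (j:ℕ) < 2*ℓ)
    (m : Fin ℓ) (hm : (m:ℕ) = 2*ℓ-1-(j:ℕ)) :
    Phi2 z j = ((z.2.1⁻¹ * z.2.2.1) * (z.2.2.2.1 m).2 * (z.2.1⁻¹ * z.2.2.1)⁻¹,
                (z.2.1⁻¹ * z.2.2.1) * (z.2.2.2.1 m).1 * (z.2.1⁻¹ * z.2.2.1)⁻¹) := by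
  simp only [Phi2]
  rw [dif_neg h1, dif_pos h2]
  have : (⟨2*ℓ-1-(j:ℕ), by omega⟩ : Fin ℓ) = m := Fin.ext (by simp only [Fin.val_mk]; omega)
  rw [this]

lemma Phi2_apply_last (j : Fin (2*ℓ+1)) (h2 : ¬ (j:ℕ) < 2*ℓ) :
    Phi2 z j = (z.2.1⁻¹, z.2.2.1 * z.2.2.2.2.2) := by
  simp only [Phi2]
  rw [dif_neg (by omega), dif_neg h2]

end phi2lemmas

/-- the image of `Φ : Z^{ℓ,2}_{n,k} → U(n)^{2(2ℓ+1)}` is exactly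
the representation variety `X^{2ℓ+1}_{n,k}`. -/
theorem stmt4 (n ℓ : ℕ) (hn : 1 ≤ n) (k : ℤ) :
    Phi2 '' Z2set n ℓ k = YMset n (2 * ℓ + 1) k := by
  ext W
  constructor
  · rintro ⟨z, hz, rfl⟩
    obtain ⟨h1, h2⟩ := hz
    rw [show -((Real.pi:ℂ) * ((k:ℝ):ℂ) / ((n:ℝ):ℂ)) * Complex.I
        = ((-(Real.pi * (k:ℝ) / (n:ℝ)) : ℝ) : ℂ) * Complex.I from by push_cast; ring] at h1
    rw [show (Real.pi:ℂ) * ((k:ℝ):ℂ) / ((n:ℝ):ℂ) * Complex.I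
        = (((Real.pi * (k:ℝ) / (n:ℝ)) : ℝ) : ℂ) * Complex.I from by push_cast; ring] at h2
    rw [coe_smul_iff] at h1 h2
    rw [show sUn n (Real.pi * (k:ℝ) / (n:ℝ)) = (sUn n (-(Real.pi * (k:ℝ) / (n:ℝ))))⁻¹ from
      by rw [sUn_inv, neg_neg]] at h2
    show (mfrak (Phi2 z) : Matrix (Fin n) (Fin n) ℂ) = _
    rw [show -(2 * (Real.pi:ℂ) * ((k:ℝ):ℂ) / ((n:ℝ):ℂ)) * Complex.I
        = ((-(2 * Real.pi * (k:ℝ) / (n:ℝ)) : ℝ) : ℂ) * Complex.I from by push_cast; ring]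
    rw [coe_smul_one_iff]
    have hu2 : sUn n (-(2 * Real.pi * (k:ℝ) / (n:ℝ)))
        = sUn n (-(Real.pi * (k:ℝ) / (n:ℝ))) * sUn n (-(Real.pi * (k:ℝ) / (n:ℝ))) := by
      rw [sUn_add]; congr 1; ring
    rw [hu2, mfrak_split3 (Phi2 z)]
    have e1 : mfrak (fun i : Fin ℓ => Phi2 z ⟨i.val, by omega⟩) = mfrak z.1 :=
      mfrak_congr fun i => Phi2_apply_lt z ⟨i.val, by omega⟩ i.isLt i rfl
    have e2 : mfrak (fun i : Fin ℓ => Phi2 z ⟨ℓ + i.val, by omega⟩)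
        = (z.2.1⁻¹ * z.2.2.1) * (mfrak z.2.2.2.1)⁻¹ * (z.2.1⁻¹ * z.2.2.1)⁻¹ := by
      rw [← mfrak_revswap z.2.2.2.1,
        ← mfrak_conj (z.2.1⁻¹ * z.2.2.1) (fun i => ((z.2.2.2.1 i.rev).2, (z.2.2.2.1 i.rev).1))]
      refine mfrak_congr fun i => ?_
      exact Phi2_apply_mid z ⟨ℓ + i.val, by omega⟩
        (by simp only [Fin.val_mk]; omega) (by simp only [Fin.val_mk]; omega)
        i.rev (by simp only [Fin.val_mk, Fin.val_rev]; omega)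
    have e3 : Phi2 z ⟨2*ℓ, by omega⟩ = (z.2.1⁻¹, z.2.2.1 * z.2.2.2.2.2) :=
      Phi2_apply_last z _ (by simp only [Fin.val_mk]; omega)
    rw [e1, e2, e3, h1, h2]
    exact central_calc _ _ _ _ _ (fun x => sUn_central n _ x) (by group)
  · intro hW
    have hW' : mfrak W = sUn n (-(2 * Real.pi * (k:ℝ) / (n:ℝ))) := by
      have h0 : (mfrak W : Matrix (Fin n) (Fin n) ℂ)
          = Complex.exp (-(2 * (Real.pi:ℂ) * ((k:ℝ):ℂ) / ((n:ℝ):ℂ)) * Complex.I) • 1 := hW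
      rw [show -(2 * (Real.pi:ℂ) * ((k:ℝ):ℂ) / ((n:ℝ):ℂ)) * Complex.I
          = ((-(2 * Real.pi * (k:ℝ) / (n:ℝ)) : ℝ) : ℂ) * Complex.I from by push_cast; ring] at h0
      rw [coe_smul_one_iff] at h0
      exact h0
    have hsplit : mfrak (fun i : Fin ℓ => W ⟨i.val, by omega⟩)
        * mfrak (fun i : Fin ℓ => W ⟨ℓ + i.val, by omega⟩)
        * ((W ⟨2*ℓ, by omega⟩).1 * (W ⟨2*ℓ, by omega⟩).2
            * (W ⟨2*ℓ, by omega⟩).1⁻¹ * (W ⟨2*ℓ, by omega⟩).2⁻¹)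
        = sUn n (-(Real.pi * (k:ℝ) / (n:ℝ))) * sUn n (-(Real.pi * (k:ℝ) / (n:ℝ))) := by
      rw [← mfrak_split3 W, hW', sUn_add]
      congr 1
      ring
    refine ⟨((fun i : Fin ℓ => W ⟨i.val, by omega⟩),
             (W ⟨2*ℓ, by omega⟩).1⁻¹,
             1,
             (fun i : Fin ℓ =>
               (((W ⟨2*ℓ, by omega⟩).1⁻¹⁻¹ * 1)⁻¹ * (W ⟨2*ℓ-1-i.val, by omega⟩).2
                  * ((W ⟨2*ℓ, by omega⟩).1⁻¹⁻¹ * 1)⁻¹⁻¹,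
                ((W ⟨2*ℓ, by omega⟩).1⁻¹⁻¹ * 1)⁻¹ * (W ⟨2*ℓ-1-i.val, by omega⟩).1
                  * ((W ⟨2*ℓ, by omega⟩).1⁻¹⁻¹ * 1)⁻¹⁻¹)),
             (sUn n (-(Real.pi * (k:ℝ) / (n:ℝ))))⁻¹
               * (mfrak (fun i : Fin ℓ => W ⟨i.val, by omega⟩) * (W ⟨2*ℓ, by omega⟩).1),
             (W ⟨2*ℓ, by omega⟩).2), ⟨?_, ?_⟩, ?_⟩
    · -- first Z2set condition
      rw [show -((Real.pi:ℂ) * ((k:ℝ):ℂ) / ((n:ℝ):ℂ)) * Complex.I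
          = ((-(Real.pi * (k:ℝ) / (n:ℝ)) : ℝ) : ℂ) * Complex.I from by push_cast; ring]
      rw [coe_smul_iff]
      group
    · -- second Z2set condition
      rw [show (Real.pi:ℂ) * ((k:ℝ):ℂ) / ((n:ℝ):ℂ) * Complex.I
          = (((Real.pi * (k:ℝ) / (n:ℝ)) : ℝ) : ℂ) * Complex.I from by push_cast; ring]
      rw [coe_smul_iff]
      rw [show sUn n (Real.pi * (k:ℝ) / (n:ℝ)) = (sUn n (-(Real.pi * (k:ℝ) / (n:ℝ))))⁻¹ from
        by rw [sUn_inv, neg_neg]]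
      have hV' : mfrak (fun i : Fin ℓ =>
               (((W ⟨2*ℓ, by omega⟩).1⁻¹⁻¹ * 1)⁻¹ * (W ⟨2*ℓ-1-i.val, by omega⟩).2
                  * ((W ⟨2*ℓ, by omega⟩).1⁻¹⁻¹ * 1)⁻¹⁻¹,
                ((W ⟨2*ℓ, by omega⟩).1⁻¹⁻¹ * 1)⁻¹ * (W ⟨2*ℓ-1-i.val, by omega⟩).1
                  * ((W ⟨2*ℓ, by omega⟩).1⁻¹⁻¹ * 1)⁻¹⁻¹))
          = ((W ⟨2*ℓ, by omega⟩).1⁻¹⁻¹ * 1)⁻¹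
              * (mfrak (fun i : Fin ℓ => W ⟨ℓ + i.val, by omega⟩))⁻¹
              * ((W ⟨2*ℓ, by omega⟩).1⁻¹⁻¹ * 1)⁻¹⁻¹ := by
        rw [← mfrak_revswap (fun i : Fin ℓ => W ⟨ℓ + i.val, by omega⟩),
          ← mfrak_conj ((W ⟨2*ℓ, by omega⟩).1⁻¹⁻¹ * 1)⁻¹
            (fun i => (((fun i : Fin ℓ => W ⟨ℓ + i.val, by omega⟩) i.rev).2,
                       ((fun i : Fin ℓ => W ⟨ℓ + i.val, by omega⟩) i.rev).1))]
        refine mfrak_congr fun i => ?_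
        have hidx : (⟨2*ℓ-1-i.val, by omega⟩ : Fin (2*ℓ+1))
            = ⟨ℓ + (i.rev).val, by have := (Fin.rev i).isLt; omega⟩ :=
          Fin.ext (by simp only [Fin.val_mk, Fin.val_rev]; omega)
        rw [hidx]
      exact hV'.trans (central_calc2 (sUn n (-(Real.pi * (k:ℝ) / (n:ℝ))))
        (mfrak (fun i : Fin ℓ => W ⟨i.val, by omega⟩))
        (mfrak (fun i : Fin ℓ => W ⟨ℓ + i.val, by omega⟩))
        ((W ⟨2*ℓ, by omega⟩).1) ((W ⟨2*ℓ, by omega⟩).2)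
        (fun x => sUn_central n _ x) hsplit)
    · -- Phi2 z = W
      funext j
      by_cases hj1 : (j:ℕ) < ℓ
      · rw [Phi2_apply_lt _ j hj1 ⟨j.val, hj1⟩ rfl]
      · by_cases hj2 : (j:ℕ) < 2*ℓ
        · rw [Phi2_apply_mid _ j hj1 hj2 ⟨2*ℓ-1-j.val, by omega⟩ rfl]
          have hWW : ∀ (x : Fin (2*ℓ+1)), (x:ℕ) = (j:ℕ) → W x = W j :=
            fun x hx => congrArg W (Fin.ext hx)
          refine Prod.ext ?_ ?_
          · exact (conj_cancel ((W ⟨2*ℓ, by omega⟩).1⁻¹⁻¹ * 1)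
                (W ⟨2*ℓ-1-(2*ℓ-1-(j:ℕ)), by omega⟩).1).trans
              (congrArg Prod.fst (hWW _ (by simp only [Fin.val_mk]; omega)))
          · exact (conj_cancel ((W ⟨2*ℓ, by omega⟩).1⁻¹⁻¹ * 1)
                (W ⟨2*ℓ-1-(2*ℓ-1-(j:ℕ)), by omega⟩).2).trans
              (congrArg Prod.snd (hWW _ (by simp only [Fin.val_mk]; omega)))
        · rw [Phi2_apply_last _ j hj2]
          have hj : (⟨2*ℓ, by omega⟩ : Fin (2*ℓ+1)) = j :=
            Fin.ext (by have := j.isLt; simp only [Fin.val_mk]; omega)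
          refine Prod.ext ?_ ?_
          · show (W ⟨2*ℓ, by omega⟩).1⁻¹⁻¹ = (W j).1
            rw [inv_inv, hj]
          · show 1 * (W ⟨2*ℓ, by omega⟩).2 = (W j).2
            rw [one_mul, hj]
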